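/- Let A_ρ ⊆ M_n be a structural matrix algebra and let φ : A_ρ → M_n be a continuous map which preserves spectrum. Then φ preserves characteristic polynomials: det(x·I − φ(X)) = det(x·I − X) as polynomials in x, for every X ∈ A_ρ. -/

import Mathlib

open Matrix Polynomial

variable {n : ℕ}


private lemma eval_charpoly_det (M : Matrix (Fin n) (Fin n) ℂ) (z : ℂ) :
    M.charpoly.eval z = (Matrix.diagonal (fun _ => z) - M).det := by
  rw [Matrix.charpoly, ← Polynomial.coe_evalRingHom, RingHom.map_det]
  congr 1
  ext i j
  by_cases h : i = j
  · subst h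
    simp [Matrix.charmatrix_apply_eq, Matrix.sub_apply]
  · simp [Matrix.charmatrix_apply_ne _ _ _ h, Matrix.diagonal_apply_ne _ h, Matrix.sub_apply]

private lemma mem_spectrum_iff_root (M : Matrix (Fin n) (Fin n) ℂ) (z : ℂ) :
    z ∈ spectrum ℂ M ↔ M.charpoly.eval z = 0 := by
  have halg : (algebraMap ℂ (Matrix (Fin n) (Fin n) ℂ)) z = Matrix.diagonal (fun _ => z) := by
    simp [Matrix.algebraMap_eq_diagonal]
  rw [spectrum.mem_iff, eval_charpoly_det, halg, Matrix.isUnit_iff_isUnit_det,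
    isUnit_iff_ne_zero, not_not]
private lemma card_roots_charpoly (M : Matrix (Fin n) (Fin n) ℂ) :
    Multiset.card M.charpoly.roots = n := by
  have hsp : M.charpoly.Splits := IsAlgClosed.splits _
  have := (hsp.natDegree_eq_card_roots).symm
  rwa [Matrix.charpoly_natDegree_eq_dim, Fintype.card_fin] at this

private lemma spectrum_eq_rootFinset (M : Matrix (Fin n) (Fin n) ℂ) :
    spectrum ℂ M = ↑M.charpoly.roots.toFinset := by
  ext z
  rw [mem_spectrum_iff_root, Finset.mem_coe, Multiset.mem_toFinset,
    mem_roots (M.charpoly_monic.ne_zero)]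
  exact ⟨fun h => h, fun h => h⟩

private lemma charpoly_eq_of_spectrum_eq {M N : Matrix (Fin n) (Fin n) ℂ}
    (hsep : N.charpoly.Separable) (hspec : spectrum ℂ M = spectrum ℂ N) :
    M.charpoly = N.charpoly := by
  have hMs : M.charpoly.Splits := IsAlgClosed.splits _
  have hNs : N.charpoly.Splits := IsAlgClosed.splits _
  have hfin : M.charpoly.roots.toFinset = N.charpoly.roots.toFinset := by
    apply Finset.coe_injective
    rw [← spectrum_eq_rootFinset, ← spectrum_eq_rootFinset, hspec]
  have hNnodup : N.charpoly.roots.Nodup := Polynomial.nodup_roots hsep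
  have hcardN : N.charpoly.roots.toFinset.card = n := by
    rw [Multiset.toFinset_card_of_nodup hNnodup, card_roots_charpoly]
  have hMnodup : M.charpoly.roots.Nodup := by
    rw [← Multiset.toFinset_card_eq_card_iff_nodup, hfin, hcardN, card_roots_charpoly]
  have hroots : M.charpoly.roots = N.charpoly.roots := by
    have h1 := Multiset.toFinset_val M.charpoly.roots
    have h2 := Multiset.toFinset_val N.charpoly.roots
    rw [Multiset.dedup_eq_self.mpr hMnodup] at h1
    rw [Multiset.dedup_eq_self.mpr hNnodup] at h2
    rw [← h1, ← h2, hfin]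
  rw [hMs.eq_prod_roots_of_monic M.charpoly_monic,
    hNs.eq_prod_roots_of_monic N.charpoly_monic, hroots]

private lemma sep_diag_charpoly :
    (Matrix.diagonal (fun i : Fin n => (i.val : ℂ))).charpoly.Separable := by
  rw [Matrix.charpoly_of_upperTriangular _ (Matrix.blockTriangular_diagonal _)]
  simp only [Matrix.diagonal_apply_eq]
  exact separable_prod_X_sub_C_iff.mpr fun i j h => Fin.val_injective (Nat.cast_injective h)
private lemma exists_good (M : Matrix (Fin n) (Fin n) ℂ) :
    ∃ c : Polynomial ℂ, c ≠ 0 ∧ ∀ t : ℂ, c.eval t ≠ 0 →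
      (M + t • (Matrix.diagonal (fun i : Fin n => (i.val : ℂ)) - M)).charpoly.Separable := by
  classical
  set D : Matrix (Fin n) (Fin n) ℂ := Matrix.diagonal (fun i : Fin n => (i.val : ℂ)) with hDdef
  set N : Matrix (Fin n) (Fin n) (Polynomial ℂ) :=
    Matrix.of (fun i j => C (M i j) + Polynomial.X * C (D i j - M i j)) with hNdef
  have hmap : ∀ t : ℂ, N.map (evalRingHom t) = M + t • (D - M) := by
    intro t
    ext i j
    simp only [hNdef, Matrix.map_apply, Matrix.of_apply, coe_evalRingHom, eval_add, eval_mul,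
      eval_C, eval_X, eval_sub, Matrix.add_apply, Matrix.smul_apply, Matrix.sub_apply, smul_eq_mul]
  set p : (Polynomial ℂ)[X] := N.charpoly with hpdef
  have hp : p.Monic := N.charpoly_monic
  have hpt : ∀ t : ℂ, p.map (evalRingHom t) = (M + t • (D - M)).charpoly := by
    intro t
    rw [hpdef, ← Matrix.charpoly_map, hmap]
  have hpev1 : p.map (evalRingHom 1) = D.charpoly := by
    rw [hpt 1, one_smul, add_sub_cancel]
  have hD : D.charpoly.Separable := sep_diag_charpoly
  -- pass to fraction field
  set K := FractionRing (Polynomial ℂ)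
  haveI : CharZero K := charZero_of_injective_algebraMap (IsFractionRing.injective (Polynomial ℂ) K)
  set pK : K[X] := p.map (algebraMap (Polynomial ℂ) K) with hpKdef
  have hpK : pK.Monic := hp.map _
  have hsqf : Squarefree pK := by
    by_contra h
    rw [Squarefree] at h
    push_neg at h
    obtain ⟨a, ha2, hau⟩ := h
    have ha0 : a ≠ 0 := by
      rintro rfl
      rw [mul_zero, zero_dvd_iff] at ha2
      exact hpK.ne_zero ha2
    have hu : IsUnit (C (leadingCoeff a)⁻¹ : K[X]) :=
      isUnit_C.mpr (isUnit_iff_ne_zero.mpr (inv_ne_zero (leadingCoeff_ne_zero.mpr ha0)))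
    set a1 : K[X] := a * C (leadingCoeff a)⁻¹ with ha1def
    have ha1m : a1.Monic := monic_mul_leadingCoeff_inv ha0
    have hassoc : Associated a a1 := ⟨hu.unit, by rw [hu.unit_spec]⟩
    have ha12 : a1 * a1 ∣ pK := ((hassoc.mul_mul hassoc).symm.dvd).trans ha2
    have ha1dvd : a1 ∣ pK := (dvd_mul_right a1 a1).trans ha12
    obtain ⟨a', ha'⟩ := IsIntegrallyClosed.eq_map_mul_C_of_dvd K hp ha1dvd
    rw [ha1m.leadingCoeff, Polynomial.C_1, mul_one] at ha'
    have ha'm : a'.Monic := by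
      apply Polynomial.monic_of_injective (IsFractionRing.injective (Polynomial ℂ) K)
      rw [ha']
      exact ha1m
    have hsq' : a' * a' ∣ p := by
      refine hp.dvd_of_fraction_map_dvd_fraction_map (K := K) (ha'm.mul ha'm) ?_
      rw [Polynomial.map_mul, ha']
      exact ha12
    have hdvd1 : (a'.map (evalRingHom 1)) * (a'.map (evalRingHom 1)) ∣ D.charpoly := by
      rw [← hpev1, ← Polynomial.map_mul]
      exact Polynomial.map_dvd _ hsq'
    have hunit : IsUnit (a'.map (evalRingHom 1)) := hD.squarefree _ hdvd1
    have ha1u : ¬ IsUnit a1 := fun h => hau (hassoc.symm.isUnit h)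
    have hdeg1 : a1.natDegree ≠ 0 := fun h => ha1u (ha1m.natDegree_eq_zero.mp h ▸ isUnit_one)
    have hdega' : a'.natDegree = a1.natDegree := by
      rw [← ha', ha'm.natDegree_map]
    have := Polynomial.natDegree_eq_zero_of_isUnit hunit
    rw [ha'm.natDegree_map, hdega'] at this
    exact hdeg1 this
  haveI : PerfectField K := PerfectField.ofCharZero
  have hsep : pK.Separable := PerfectField.separable_iff_squarefree.mpr hsqf
  obtain ⟨u, v, huv⟩ := hsep
  obtain ⟨b1, hb1⟩ := IsLocalization.integerNormalization_map_to_map (nonZeroDivisors (Polynomial ℂ)) u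
  obtain ⟨b2, hb2⟩ := IsLocalization.integerNormalization_map_to_map (nonZeroDivisors (Polynomial ℂ)) v
  set U : (Polynomial ℂ)[X] := IsLocalization.integerNormalization (nonZeroDivisors (Polynomial ℂ)) u with hUdef
  set V : (Polynomial ℂ)[X] := IsLocalization.integerNormalization (nonZeroDivisors (Polynomial ℂ)) v with hVdef
  set c : (Polynomial ℂ) := (b1 : (Polynomial ℂ)) * (b2 : (Polynomial ℂ)) with hcdef
  have hc0 : c ≠ 0 := mul_ne_zero (nonZeroDivisors.ne_zero b1.2) (nonZeroDivisors.ne_zero b2.2)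
  -- key identity in (Polynomial ℂ)[X]
  have hkey : (C (b2 : (Polynomial ℂ)) * U) * p + (C (b1 : (Polynomial ℂ)) * V) * derivative p = C c := by
    apply Polynomial.map_injective (algebraMap (Polynomial ℂ) K) (IsFractionRing.injective (Polynomial ℂ) K)
    have hsmul : ∀ (b : (Polynomial ℂ)) (w : K[X]), (b • w) = C (algebraMap (Polynomial ℂ) K b) * w := by
      intro b w
      rw [← smul_eq_C_mul, algebraMap_smul]
    rw [Polynomial.map_add, Polynomial.map_mul, Polynomial.map_mul, Polynomial.map_mul,
      Polynomial.map_mul, Polynomial.map_C, Polynomial.map_C, Polynomial.map_C,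
      hb1, hb2, hsmul, hsmul, ← Polynomial.derivative_map, ← hpKdef]
    rw [hcdef, _root_.map_mul]
    calc C ((algebraMap (Polynomial ℂ) K) ↑b2) * (C ((algebraMap (Polynomial ℂ) K) ↑b1) * u) * pK +
          C ((algebraMap (Polynomial ℂ) K) ↑b1) * (C ((algebraMap (Polynomial ℂ) K) ↑b2) * v) * derivative pK
        = C ((algebraMap (Polynomial ℂ) K) ↑b1) * C ((algebraMap (Polynomial ℂ) K) ↑b2) * (u * pK + v * derivative pK) := by ring
      _ = C ((algebraMap (Polynomial ℂ) K) ↑b1 * (algebraMap (Polynomial ℂ) K) ↑b2) := by rw [huv, mul_one, ← Polynomial.C_mul]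
  refine ⟨c, hc0, ?_⟩
  intro t ht
  rw [← hpt t]
  have hkt := congrArg (Polynomial.map (evalRingHom t)) hkey
  rw [Polynomial.map_add, Polynomial.map_mul, Polynomial.map_mul, Polynomial.map_mul,
    Polynomial.map_mul, Polynomial.map_C, Polynomial.map_C, Polynomial.map_C,
    ← Polynomial.derivative_map] at hkt
  -- hkt : (C (eval t b2) * U.map) * p.map + (C (eval t b1) * V.map) * (p.map).derivative = C (eval t c)
  refine ⟨C (c.eval t)⁻¹ * (C ((evalRingHom t) (b2 : (Polynomial ℂ))) * U.map (evalRingHom t)),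
    C (c.eval t)⁻¹ * (C ((evalRingHom t) (b1 : (Polynomial ℂ))) * V.map (evalRingHom t)), ?_⟩
  have : C ((c.eval t)⁻¹) * ((C ((evalRingHom t) (b2 : (Polynomial ℂ))) * U.map (evalRingHom t)) * p.map (evalRingHom t) +
      (C ((evalRingHom t) (b1 : (Polynomial ℂ))) * V.map (evalRingHom t)) * derivative (p.map (evalRingHom t))) = 1 := by
    rw [hkt]
    rw [← Polynomial.C_mul]
    rw [show (evalRingHom t) c = c.eval t from rfl, inv_mul_cancel₀ ht, Polynomial.C_1]
  rw [← this]
  ring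

theorem stmt_13 (n : ℕ) (ρ : Fin n → Fin n → Prop)
    (hrefl : ∀ i, ρ i i) (htrans : ∀ i j k, ρ i j → ρ j k → ρ i k)
    (A : Set (Matrix (Fin n) (Fin n) ℂ))
    (hA : A = {X : Matrix (Fin n) (Fin n) ℂ | ∀ i j, ¬ ρ i j → X i j = 0})
    (φ : Matrix (Fin n) (Fin n) ℂ → Matrix (Fin n) (Fin n) ℂ)
    (hcont : ContinuousOn φ A)
    (hspec : ∀ X ∈ A, spectrum ℂ (φ X) = spectrum ℂ X) :
    ∀ X ∈ A, (φ X).charpoly = X.charpoly := by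
  intro X hX
  set D : Matrix (Fin n) (Fin n) ℂ := Matrix.diagonal (fun i : Fin n => (i.val : ℂ)) with hDdef
  obtain ⟨c, hc0, hcgood⟩ := exists_good X
  have hpath : ∀ t : ℂ, X + t • (D - X) ∈ A := by
    intro t
    rw [hA]
    intro i j hij
    have hXij : X i j = 0 := by rw [hA] at hX; exact hX i j hij
    have hDij : D i j = 0 := by
      have hne : i ≠ j := fun h => hij (h ▸ hrefl i)
      exact Matrix.diagonal_apply_ne _ hne
    simp [Matrix.add_apply, Matrix.smul_apply, Matrix.sub_apply, hXij, hDij]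
  set S := {t : ℂ | c.eval t ≠ 0} with hSdef
  have hSdense : Dense S := by
    have hfin : {t : ℂ | c.eval t = 0}.Finite := Polynomial.finite_setOf_isRoot hc0
    have := hfin.countable.dense_compl ℂ
    convert this using 1
    exact Set.ext fun _ => Iff.rfl
  have h0 : (0:ℂ) ∈ closure S := hSdense 0
  haveI hne : (nhdsWithin (0:ℂ) S).NeBot := mem_closure_iff_nhdsWithin_neBot.mp h0
  set ψ : ℂ → Matrix (Fin n) (Fin n) ℂ := fun t => X + t • (D - X) with hψdef
  have hψcont : Continuous ψ := by
    exact continuous_const.add (continuous_id.smul continuous_const)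
  have hψ0 : ψ 0 = X := by simp [hψdef]
  have htend : Filter.Tendsto ψ (nhdsWithin 0 S) (nhdsWithin X A) := by
    rw [tendsto_nhdsWithin_iff]
    constructor
    · have := hψcont.tendsto 0
      rw [hψ0] at this
      exact this.mono_left nhdsWithin_le_nhds
    · exact Filter.Eventually.of_forall fun t => hpath t
  have hφtend : Filter.Tendsto (fun t => φ (ψ t)) (nhdsWithin 0 S) (nhds (φ X)) :=
    Filter.Tendsto.comp (hcont X hX) htend
  have key : ∀ z : ℂ, (φ X).charpoly.eval z = X.charpoly.eval z := by
    intro z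
    have hdetc : Continuous fun M : Matrix (Fin n) (Fin n) ℂ =>
        (Matrix.diagonal (fun _ : Fin n => z) - M).det :=
      (continuous_const.sub continuous_id).matrix_det
    have h1 : Filter.Tendsto (fun t => (Matrix.diagonal (fun _ : Fin n => z) - φ (ψ t)).det)
        (nhdsWithin 0 S) (nhds ((Matrix.diagonal (fun _ : Fin n => z) - φ X).det)) :=
      (hdetc.tendsto _).comp hφtend
    have h2 : Filter.Tendsto (fun t => (Matrix.diagonal (fun _ : Fin n => z) - ψ t).det)
        (nhdsWithin 0 S) (nhds ((Matrix.diagonal (fun _ : Fin n => z) - X).det)) :=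
      (hdetc.tendsto _).comp (htend.mono_right nhdsWithin_le_nhds)
    have heq : (fun t => (Matrix.diagonal (fun _ : Fin n => z) - φ (ψ t)).det) =ᶠ[nhdsWithin 0 S]
        (fun t => (Matrix.diagonal (fun _ : Fin n => z) - ψ t).det) := by
      filter_upwards [self_mem_nhdsWithin] with t ht
      have hsept : (ψ t).charpoly.Separable := hcgood t ht
      have hcp : (φ (ψ t)).charpoly = (ψ t).charpoly :=
        charpoly_eq_of_spectrum_eq hsept (hspec _ (hpath t))
      rw [← eval_charpoly_det, ← eval_charpoly_det, hcp]
    have := tendsto_nhds_unique (h1.congr' heq) h2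
    rw [eval_charpoly_det, eval_charpoly_det, this]
  exact Polynomial.funext key
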